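/- arXiv:2510.25209 — 2 statements merged into one kernel-verified Lean document; each statement's English description precedes it below -/
import Mathlib

section
/- Let M be a maximum matching of a bipartite graph G with Dulmage–Mendelsohn classes E (even), O (odd), U (unreachable). Then every vertex of O ∪ U is matched by M, and |M| = |O| + |U|/2. -/
open SimpleGraph

/-- Edges of a list alternate w.r.t. membership in `S`; the flag records whether
the next edge must belong to `S`. -/
def altEdges {V : Type*} (S : Set (Sym2 V)) : Bool → List (Sym2 V) → Prop
  | _, [] => True
  | flag, e :: rest => (e ∈ S ↔ flag = true) ∧ altEdges S (!flag) rest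

/-- `v` is reachable from some `M`-unmatched vertex by an alternating path
(starting with a non-matching edge) of even length. -/
def EvenVtx {V : Type*} (G : SimpleGraph V) (M : G.Subgraph) (v : V) : Prop :=
  ∃ u, u ∉ M.verts ∧ ∃ p : G.Walk u v,
    p.IsPath ∧ altEdges M.edgeSet false p.edges ∧ Even p.length

/-- `v` is reachable from some `M`-unmatched vertex by an alternating path of
odd length. -/
def OddVtx {V : Type*} (G : SimpleGraph V) (M : G.Subgraph) (v : V) : Prop :=
  ∃ u, u ∉ M.verts ∧ ∃ p : G.Walk u v,
    p.IsPath ∧ altEdges M.edgeSet false p.edges ∧ Odd p.length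

/-- `v` is not reachable from any `M`-unmatched vertex by an alternating path. -/
def UnreachableVtx {V : Type*} (G : SimpleGraph V) (M : G.Subgraph) (v : V) : Prop :=
  ∀ u (p : G.Walk u v), u ∉ M.verts → p.IsPath →
    altEdges M.edgeSet false p.edges → False

section AuxList
variable {V : Type*} {S T : Set (Sym2 V)}

def flipN (b : Bool) (n : ℕ) : Bool := if Even n then b else !b

lemma flipN_zero (b : Bool) : flipN b 0 = b := by simp [flipN]

lemma flipN_succ (b : Bool) (n : ℕ) : flipN b (n + 1) = flipN (!b) n := by
  by_cases h : Even n <;> simp [flipN, Nat.even_add_one, h]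

lemma flipN_congr (b : Bool) {m n : ℕ} (h : (Even m ↔ Even n)) : flipN b m = flipN b n := by
  by_cases hm : Even m
  · simp [flipN, hm, h.mp hm]
  · have hn : ¬ Even n := fun hn => hm (h.mpr hn)
    simp [flipN, hm, hn]

lemma flipN_flipN (b : Bool) (n : ℕ) : flipN (flipN b n) n = b := by
  by_cases h : Even n <;> simp [flipN, h]

lemma altEdges_append {l₁ l₂ : List (Sym2 V)} {b : Bool} :
    altEdges S b (l₁ ++ l₂) ↔ altEdges S b l₁ ∧ altEdges S (flipN b l₁.length) l₂ := by
  induction l₁ generalizing b with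
  | nil => simp [altEdges, flipN_zero]
  | cons e t ih => simp [altEdges, ih, List.length_cons, flipN_succ, and_assoc]

lemma altEdges_congr {l : List (Sym2 V)} {b : Bool}
    (h : ∀ e ∈ l, (e ∈ S ↔ e ∈ T)) : altEdges S b l → altEdges T b l := by
  induction l generalizing b with
  | nil => intro _; trivial
  | cons e t ih =>
    rintro ⟨h1, h2⟩
    exact ⟨(h e (by simp)).symm.trans h1, ih (fun e' he' => h e' (by simp [he'])) h2⟩

lemma altEdges_reverse {l : List (Sym2 V)} {b : Bool} (h : altEdges S b l) :
    altEdges S (flipN b (l.length - 1)) l.reverse := by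
  induction l generalizing b with
  | nil => trivial
  | cons e t ih =>
    obtain ⟨h1, h2⟩ := h
    have ht := ih h2
    rw [List.reverse_cons]
    have hlen : (e :: t).length - 1 = t.length := by simp
    rw [hlen]
    rw [altEdges_append]
    refine ⟨?_, ?_⟩
    · cases t with
      | nil => trivial
      | cons e' t' =>
        have : flipN (!b) ((e' :: t').length - 1) = flipN b (e' :: t').length := by
          simp only [List.length_cons, Nat.add_sub_cancel, flipN_succ]
        rwa [this] at ht
    · rw [List.length_reverse, flipN_flipN]
      exact ⟨h1, trivial⟩
end AuxList

section AuxGraph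
variable {V : Type*} {G : SimpleGraph V}

lemma walk_parity (side : V → Bool) (hbip : ∀ u v, G.Adj u v → side u ≠ side v)
    {u v : V} (p : G.Walk u v) : Even p.length ↔ side u = side v := by
  induction p with
  | nil => simp
  | @cons u x v h q ih =>
    have hne := hbip u x h
    rw [Walk.length_cons, Nat.even_add_one, ih]
    cases hux : side u <;> cases hx : side x <;> cases hv : side v <;> simp_all

lemma matching_unique {M : G.Subgraph} (hM : M.IsMatching) {a b c : V}
    (h1 : M.Adj a b) (h2 : M.Adj a c) : b = c :=
  ((hM (M.edge_vert h1)).unique h1 h2)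

/-- delete a matched pair from a matching -/
lemma matching_deleteVerts {M : G.Subgraph} (hM : M.IsMatching) {x y : V}
    (hxy : M.Adj x y) : (M.deleteVerts {x, y}).IsMatching := by
  intro v hv
  rw [Subgraph.deleteVerts_verts] at hv
  obtain ⟨hvM, hvxy⟩ := hv
  obtain ⟨w, hw, huniq⟩ := hM hvM
  have hwxy : w ∉ ({x, y} : Set V) := by
    rintro (rfl | rfl)
    · have := matching_unique hM hw.symm hxy
      exact hvxy (by simp [this])
    · have := matching_unique hM hw.symm hxy.symm
      exact hvxy (by simp [this])
  refine ⟨w, ?_, ?_⟩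
  · exact Subgraph.deleteVerts_adj.mpr ⟨hvM, hvxy, M.edge_vert hw.symm, hwxy, hw⟩
  · intro y' hy'
    rw [Subgraph.deleteVerts_adj] at hy'
    exact huniq y' hy'.2.2.2.2

lemma deleteVerts_pair_edgeSet {M : G.Subgraph} (hM : M.IsMatching) {x y : V}
    (hxy : M.Adj x y) : (M.deleteVerts {x, y}).edgeSet = M.edgeSet \ {s(x, y)} := by
  ext e
  induction e with
  | _ a b =>
    simp only [Subgraph.mem_edgeSet, Subgraph.deleteVerts_adj, Set.mem_diff,
      Set.mem_singleton_iff, Set.mem_insert_iff]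
    constructor
    · rintro ⟨_, ha, _, hb, hab⟩
      refine ⟨hab, ?_⟩
      intro he
      rw [Sym2.eq_iff] at he
      rcases he with ⟨rfl, rfl⟩ | ⟨rfl, rfl⟩
      · exact ha (by simp)
      · exact hb (by simp)
    · rintro ⟨hab, hne⟩
      have ha : a ∉ ({x, y} : Set V) := by
        rintro (rfl | rfl)
        · exact hne (by rw [matching_unique hM hab hxy])
        · exact hne (by rw [matching_unique hM hab hxy.symm]; exact Sym2.eq_swap)
      have hb : b ∉ ({x, y} : Set V) := by
        rintro (rfl | rfl)
        · exact hne (by rw [matching_unique hM hab.symm hxy]; exact Sym2.eq_swap)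
        · exact hne (by rw [matching_unique hM hab.symm hxy.symm])
      exact ⟨M.edge_vert hab, ha, M.edge_vert hab.symm, hb, hab⟩
end AuxGraph

section Toggle
variable {V : Type*} {G : SimpleGraph V}

/-- Toggle: replace matched edge x-y by new edge u-x (u unmatched). -/
lemma toggle {M : G.Subgraph} (hM : M.IsMatching) {u x y : V}
    (hux : G.Adj u x) (hxy : M.Adj x y) (hu : u ∉ M.verts) :
    ∃ M' : G.Subgraph, M'.IsMatching ∧
      M'.verts = (M.verts \ {x, y}) ∪ {u, x} ∧
      M'.edgeSet = (M.edgeSet \ {s(x, y)}) ∪ {s(u, x)} := by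
  refine ⟨(M.deleteVerts {x, y}) ⊔ G.subgraphOfAdj hux, ?_, ?_, ?_⟩
  · refine Subgraph.IsMatching.sup (matching_deleteVerts hM hxy)
      (Subgraph.IsMatching.subgraphOfAdj hux) ?_
    have h1 : (M.deleteVerts {x, y}).support ⊆ M.verts \ {x, y} := by
      rw [← Subgraph.deleteVerts_verts]
      exact Subgraph.support_subset_verts _
    have h2 : (G.subgraphOfAdj hux).support ⊆ {u, x} := by
      rw [← subgraphOfAdj_verts]
      exact Subgraph.support_subset_verts _
    refine Set.disjoint_of_subset h1 h2 ?_
    rw [Set.disjoint_left]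
    rintro a ⟨haM, haxy⟩ (rfl | rfl)
    · exact hu haM
    · exact haxy (by simp)
  · rw [Subgraph.verts_sup, Subgraph.deleteVerts_verts, subgraphOfAdj_verts]
  · rw [Subgraph.edgeSet_sup, deleteVerts_pair_edgeSet hM hxy, edgeSet_subgraphOfAdj]

lemma augment_aux {G : SimpleGraph V} :
    ∀ (n : ℕ) (M : G.Subgraph), M.IsMatching → ∀ (u v : V) (p : G.Walk u v),
      p.length = n → p.IsPath → altEdges M.edgeSet false p.edges → Odd p.length →
      u ∉ M.verts → v ∉ M.verts →
      ∃ N : G.Subgraph, N.IsMatching ∧ N.verts = M.verts ∪ {u, v} := by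
  intro n
  induction n using Nat.strong_induction_on with
  | _ n ih =>
    intro M hM u v p hn hp halt hodd hu hv
    cases p with
    | nil => simp at hodd
    | @cons _ x _ hadjux q =>
      cases q with
      | nil =>
        -- single edge u ~ v
        refine ⟨M ⊔ G.subgraphOfAdj hadjux, ?_, ?_⟩
        · refine Subgraph.IsMatching.sup hM (Subgraph.IsMatching.subgraphOfAdj hadjux) ?_
          rw [Subgraph.IsMatching.support_eq_verts hM]
          have h2 : (G.subgraphOfAdj hadjux).support ⊆ {u, v} := by
            rw [← subgraphOfAdj_verts]
            exact Subgraph.support_subset_verts _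
          refine Set.disjoint_left.mpr ?_
          intro a haM ha2
          rcases h2 ha2 with rfl | rfl
          · exact hu haM
          · exact hv haM
        · rw [Subgraph.verts_sup, subgraphOfAdj_verts]
      | @cons _ y _ hadjxy r =>
        -- p = u ~ x ~ y ~ ... ~ v
        rw [Walk.edges_cons, Walk.edges_cons] at halt
        obtain ⟨he0, he1, haltr⟩ := halt
        have hMxy : M.Adj x y := Subgraph.mem_edgeSet.mp (he1.mpr rfl)
        obtain ⟨M', hM', hMv', hMe'⟩ := toggle hM hadjux hMxy hu
        have hxM : x ∈ M.verts := M.edge_vert hMxy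
        have hyM : y ∈ M.verts := M.edge_vert hMxy.symm
        have hpq : (Walk.cons hadjxy r).IsPath ∧ u ∉ (Walk.cons hadjxy r).support :=
          (Walk.cons_isPath_iff _ _).mp hp
        have hr : r.IsPath ∧ x ∉ r.support := (Walk.cons_isPath_iff _ _).mp hpq.1
        have huv : u ≠ v := by
          rintro rfl
          exact hpq.2 (Walk.end_mem_support _)
        have hyu : y ≠ u := fun h => hu (h ▸ hyM)
        have hy' : y ∉ M'.verts := by
          rw [hMv']
          rintro (⟨_, hc⟩ | hc)
          · exact hc (by simp)
          · rcases hc with rfl | rfl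
            · exact hyu rfl
            · exact hadjxy.ne' rfl
        have hv' : v ∉ M'.verts := by
          rw [hMv']
          rintro (⟨hc, _⟩ | hc)
          · exact hv hc
          · rcases hc with rfl | rfl
            · exact huv rfl
            · exact hv hxM
        -- edges of r are not s(x,y) nor s(u,x)
        have hnodup : (s(u,x) :: s(x,y) :: r.edges).Nodup := hp.isTrail.edges_nodup
        have haltr' : altEdges M'.edgeSet false r.edges := by
          refine altEdges_congr (fun e he => ?_) haltr
          rw [hMe']
          have h1 : e ≠ s(x, y) := by
            rintro rfl
            exact (List.nodup_cons.mp (List.nodup_cons.mp hnodup).2).1 he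
          have h2 : e ≠ s(u, x) := by
            rintro rfl
            exact (List.nodup_cons.mp hnodup).1 (by simp [he])
          simp [h1, h2]
        have hlen : r.length < n := by
          rw [← hn]; simp only [Walk.length_cons]; omega
        have hoddr : Odd r.length := by
          simp only [Walk.length_cons] at hodd
          rw [Nat.odd_iff] at hodd ⊢
          omega
        obtain ⟨N, hN, hNv⟩ := ih r.length hlen M' hM' y v r rfl hr.1 haltr' hoddr hy' hv'
        refine ⟨N, hN, ?_⟩
        rw [hNv, hMv']
        ext a
        simp only [Set.mem_union, Set.mem_diff, Set.mem_insert_iff, Set.mem_singleton_iff]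
        constructor
        · rintro ((⟨ha, _⟩ | (rfl | rfl)) | (rfl | rfl))
          · exact Or.inl ha
          · exact Or.inr (Or.inl rfl)
          · exact Or.inl hxM
          · exact Or.inl hyM
          · exact Or.inr (Or.inr rfl)
        · rintro (ha | (rfl | rfl))
          · by_cases hax : a = x
            · exact Or.inl (Or.inr (Or.inr hax))
            · by_cases hay : a = y
              · exact Or.inr (Or.inl hay)
              · exact Or.inl (Or.inl ⟨ha, by simp [hax, hay]⟩)
          · exact Or.inl (Or.inr (Or.inl rfl))
          · exact Or.inr (Or.inr rfl)
end Toggle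

section Splice
variable {V : Type*} {G : SimpleGraph V}

lemma path_ne {u v : V} {p : G.Walk u v} (hp : p.IsPath) (h : p.length ≠ 0) : u ≠ v := by
  cases p with
  | nil => simp at h
  | cons h' q =>
    rintro rfl
    exact ((Walk.cons_isPath_iff _ _).mp hp).2 (Walk.end_mem_support q)

/-- No augmenting path for a maximum matching. -/
lemma no_aug [Fintype V] {M : G.Subgraph} (hM : M.IsMatching)
    (hmax : ∀ N : G.Subgraph, N.IsMatching → N.verts.ncard ≤ M.verts.ncard)
    {u v : V} (p : G.Walk u v) (hp : p.IsPath)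
    (halt : altEdges M.edgeSet false p.edges) (hodd : Odd p.length)
    (hu : u ∉ M.verts) (hv : v ∉ M.verts) : False := by
  obtain ⟨N, hN, hNv⟩ := augment_aux p.length M hM u v p rfl hp halt hodd hu hv
  have huv : u ≠ v := path_ne hp (by rintro h0; rw [h0] at hodd; simp at hodd)
  have h1 : N.verts = insert u (insert v M.verts) := by
    rw [hNv]; ext a
    simp only [Set.mem_union, Set.mem_insert_iff, Set.mem_singleton_iff]
    tauto
  have h2 : N.verts.ncard = M.verts.ncard + 2 := by
    rw [h1, Set.ncard_insert_of_notMem (by simp [huv, hu]),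
      Set.ncard_insert_of_notMem hv]
  have := hmax N hN
  omega

/-- From an odd alternating walk extract an odd alternating path (bipartite case). -/
lemma splice (side : V → Bool) (hbip : ∀ u v, G.Adj u v → side u ≠ side v)
    {M : G.Subgraph} :
    ∀ (n : ℕ) {u v : V} (w : G.Walk u v), w.length = n →
      altEdges M.edgeSet false w.edges → Odd w.length →
      ∃ p : G.Walk u v, p.IsPath ∧ altEdges M.edgeSet false p.edges ∧ Odd p.length := by
  classical
  intro n
  induction n using Nat.strong_induction_on with
  | _ n ih =>
    intro u v w hn halt hodd
    by_cases hnd : w.support.Nodup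
    · exact ⟨w, Walk.isPath_def _ |>.mpr hnd, halt, hodd⟩
    · obtain ⟨x, hdup⟩ := List.exists_duplicate_iff_not_nodup.mpr hnd
      have hx : x ∈ w.support := hdup.mem
      have hcount : (w.takeUntil x hx).support.count x = 1 :=
        Walk.count_support_takeUntil_eq_one w hx
      have hsup : w.support = (w.takeUntil x hx).support ++ (w.dropUntil x hx).support.tail := by
        conv_lhs => rw [← Walk.take_spec w hx]
        rw [Walk.support_append]
      have hx2' : x ∈ (w.dropUntil x hx).support.tail := by
        have h2 : 2 ≤ w.support.count x := List.duplicate_iff_two_le_count.mp hdup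
        rw [hsup, List.count_append] at h2
        have : 0 < ((w.dropUntil x hx).support.tail).count x := by omega
        exact List.count_pos_iff.mp this
      have hw2len : (w.dropUntil x hx).length ≠ 0 := by
        intro h0
        have hls := Walk.length_support (w.dropUntil x hx)
        have htl : (w.dropUntil x hx).support.tail.length
            = (w.dropUntil x hx).support.length - 1 := by
          simp [List.length_tail]
        have : (w.dropUntil x hx).support.tail.length = 0 := by omega
        rw [List.length_eq_zero_iff.mp this] at hx2'
        simp at hx2'
      obtain ⟨y, hady, r, hw2⟩ := Walk.not_nil_iff.mp
        (by rw [Walk.nil_iff_length_eq]; exact hw2len)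
      have hxr : x ∈ r.support := by
        rw [hw2] at hx2'
        simpa [Walk.support_cons] using hx2'
      -- decompositions
      have hre : r.edges = (r.takeUntil x hxr).edges ++ (r.dropUntil x hxr).edges := by
        conv_lhs => rw [← Walk.take_spec r hxr]
        rw [Walk.edges_append]
      have hwe : w.edges = (w.takeUntil x hx).edges ++ (w.dropUntil x hx).edges := by
        conv_lhs => rw [← Walk.take_spec w hx]
        rw [Walk.edges_append]
      have hsplit : w.edges = ((w.takeUntil x hx).edges ++
          (s(x, y) :: (r.takeUntil x hxr).edges)) ++ (r.dropUntil x hxr).edges := by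
        rw [hwe, hw2, Walk.edges_cons, hre]
        simp [List.append_assoc]
      rw [hsplit, altEdges_append, altEdges_append] at halt
      obtain ⟨⟨halt1, -⟩, halt2⟩ := halt
      -- parity of the removed part
      have hrt_odd : ¬ Even (r.takeUntil x hxr).length :=
        fun he => (hbip x y hady) (((walk_parity side hbip _).mp he).symm)
      have hb : (r.takeUntil x hxr).length % 2 = 1 :=
        Nat.odd_iff.mp (Nat.not_even_iff_odd.mp hrt_odd)
      have hflag : flipN false (((w.takeUntil x hx).edges ++
            (s(x, y) :: (r.takeUntil x hxr).edges)).length)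
          = flipN false ((w.takeUntil x hx).edges.length) := by
        apply flipN_congr
        simp only [List.length_append, List.length_cons, Walk.length_edges, Nat.even_iff]
        omega
      have halt' : altEdges M.edgeSet false
          ((w.takeUntil x hx).append (r.dropUntil x hxr)).edges := by
        rw [Walk.edges_append, altEdges_append]
        exact ⟨halt1, hflag ▸ halt2⟩
      have hrl : r.length = (r.takeUntil x hxr).length + (r.dropUntil x hxr).length := by
        conv_lhs => rw [← Walk.take_spec r hxr]
        rw [Walk.length_append]
      have hlw : w.length = (w.takeUntil x hx).length +
          (1 + ((r.takeUntil x hxr).length + (r.dropUntil x hxr).length)) := by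
        conv_lhs => rw [← Walk.take_spec w hx]
        rw [Walk.length_append, hw2, Walk.length_cons]
        omega
      have hw'len : ((w.takeUntil x hx).append (r.dropUntil x hxr)).length
          = (w.takeUntil x hx).length + (r.dropUntil x hxr).length :=
        Walk.length_append _ _
      have hodd' : Odd ((w.takeUntil x hx).append (r.dropUntil x hxr)).length := by
        rw [Nat.odd_iff] at hodd ⊢
        rw [hw'len]
        rw [hlw] at hodd
        omega
      have hlt : ((w.takeUntil x hx).append (r.dropUntil x hxr)).length < n := by
        rw [hw'len]
        omega
      exact ih _ hlt _ rfl halt' hodd'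
end Splice

section Classes
variable {V : Type*} {G : SimpleGraph V} {M : G.Subgraph}

lemma flipN_of_even {b : Bool} {n : ℕ} (h : Even n) : flipN b n = b := if_pos h
lemma flipN_of_odd {b : Bool} {n : ℕ} (h : ¬ Even n) : flipN b n = !b := if_neg h

lemma rev_alt {u v : V} {p : G.Walk u v} (halt : altEdges M.edgeSet false p.edges) :
    altEdges M.edgeSet (flipN false (p.length - 1)) p.reverse.edges := by
  have := altEdges_reverse halt
  rw [Walk.length_edges] at this
  rwa [Walk.edges_reverse]

lemma even_of_unmatched {u : V} (hu : u ∉ M.verts) : EvenVtx G M u :=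
  ⟨u, hu, Walk.nil, Walk.IsPath.nil, trivial, by simp⟩

lemma odd_matched [Fintype V] (hM : M.IsMatching)
    (hmax : ∀ N : G.Subgraph, N.IsMatching → N.verts.ncard ≤ M.verts.ncard)
    {v : V} (hO : OddVtx G M v) : v ∈ M.verts := by
  obtain ⟨u, hu, p, hp, halt, hodd⟩ := hO
  by_contra hv
  exact no_aug hM hmax p hp halt hodd hu hv

lemma unreachable_iff {v : V} :
    UnreachableVtx G M v ↔ ¬ EvenVtx G M v ∧ ¬ OddVtx G M v := by
  constructor
  · intro h
    constructor
    · rintro ⟨u, hu, p, hp, halt, -⟩; exact h u p hu hp halt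
    · rintro ⟨u, hu, p, hp, halt, -⟩; exact h u p hu hp halt
  · rintro ⟨hE, hO⟩ u p hu hp halt
    rcases Nat.even_or_odd p.length with he | ho
    · exact hE ⟨u, hu, p, hp, halt, he⟩
    · exact hO ⟨u, hu, p, hp, halt, ho⟩

lemma unreachable_matched [Fintype V] {v : V} (h : UnreachableVtx G M v) :
    v ∈ M.verts := by
  by_contra hv
  exact (unreachable_iff.mp h).1 (even_of_unmatched hv)

lemma not_even_and_odd [Fintype V] (side : V → Bool)
    (hbip : ∀ u v, G.Adj u v → side u ≠ side v) (hM : M.IsMatching)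
    (hmax : ∀ N : G.Subgraph, N.IsMatching → N.verts.ncard ≤ M.verts.ncard)
    {v : V} (hE : EvenVtx G M v) (hO : OddVtx G M v) : False := by
  obtain ⟨u, hu, p, hp, halt, heven⟩ := hE
  obtain ⟨u', hu', q, hq, halt', hodd'⟩ := hO
  by_cases h0 : p.length = 0
  · obtain rfl := Walk.eq_of_length_eq_zero h0
    exact hu (odd_matched hM hmax ⟨u', hu', q, hq, halt', hodd'⟩)
  · have hrev := rev_alt halt
    have hflag : flipN false (p.length - 1) = true := by
      rw [Nat.even_iff] at heven
      have : ¬ Even (p.length - 1) := by rw [Nat.even_iff]; omega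
      exact flipN_of_odd this
    rw [hflag] at hrev
    have haltW : altEdges M.edgeSet false (q.append p.reverse).edges := by
      rw [Walk.edges_append, altEdges_append]
      refine ⟨halt', ?_⟩
      have hf : flipN false q.edges.length = true := by
        rw [Nat.odd_iff] at hodd'
        have : ¬ Even q.edges.length := by rw [Walk.length_edges, Nat.even_iff]; omega
        exact flipN_of_odd this
      rw [hf]; exact hrev
    have hoddW : Odd (q.append p.reverse).length := by
      have hl : (q.append p.reverse).length = q.length + p.length := by
        rw [Walk.length_append, Walk.length_reverse]
      rw [hl, Nat.odd_iff]
      rw [Nat.odd_iff] at hodd'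
      rw [Nat.even_iff] at heven
      omega
    obtain ⟨P, hP, hPalt, hPodd⟩ := splice side hbip _ (q.append p.reverse) rfl haltW hoddW
    exact no_aug hM hmax P hP hPalt hPodd hu' hu

lemma even_partner (hM : M.IsMatching) {v w : V}
    (hE : EvenVtx G M v) (hadj : M.Adj v w) : OddVtx G M w := by
  obtain ⟨u, hu, p, hp, halt, heven⟩ := hE
  have hvM : v ∈ M.verts := M.edge_vert hadj
  have hvu : v ≠ u := fun h => hu (h ▸ hvM)
  have h0 : p.length ≠ 0 := fun h => hvu (Walk.eq_of_length_eq_zero h).symm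
  obtain ⟨x, hvx, r, hpr⟩ := Walk.exists_eq_cons_of_ne hvu p.reverse
  have hrev := rev_alt halt
  have hflag : flipN false (p.length - 1) = true := by
    rw [Nat.even_iff] at heven
    have : ¬ Even (p.length - 1) := by rw [Nat.even_iff]; omega
    exact flipN_of_odd this
  rw [hflag, hpr, Walk.edges_cons] at hrev
  obtain ⟨h1, h2⟩ := hrev
  have hMvx : M.Adj v x := Subgraph.mem_edgeSet.mp (h1.mpr rfl)
  obtain rfl : x = w := matching_unique hM hMvx hadj
  have hrpath : r.IsPath := by
    have := hp.reverse
    rw [hpr] at this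
    exact ((Walk.cons_isPath_iff _ _).mp this).1
  have hrlen : r.length = p.length - 1 := by
    have : p.reverse.length = r.length + 1 := by rw [hpr, Walk.length_cons]
    rw [Walk.length_reverse] at this
    omega
  have hrodd : Odd r.length := by
    rw [Nat.odd_iff]
    rw [Nat.even_iff] at heven
    omega
  refine ⟨u, hu, r.reverse, hrpath.reverse, ?_, by rwa [Walk.length_reverse]⟩
  have := rev_alt (M := M) h2
  have hf : flipN false (r.length - 1) = false := by
    have : Even (r.length - 1) := by
      rw [Nat.odd_iff] at hrodd
      rw [Nat.even_iff]
      omega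
    exact flipN_of_even this
  rwa [hf] at this

lemma odd_partner (side : V → Bool) (hbip : ∀ u v, G.Adj u v → side u ≠ side v)
    (hM : M.IsMatching) {v w : V}
    (hO : OddVtx G M v) (hadj : M.Adj v w) : EvenVtx G M w := by
  classical
  obtain ⟨u, hu, p, hp, halt, hodd⟩ := hO
  have hGvw : G.Adj v w := hadj.adj_sub
  have hwv : w ≠ v := hGvw.ne'
  have hwns : w ∉ p.support := by
    intro hw
    have hspec := Walk.take_spec p hw
    have hedges : p.edges = (p.takeUntil w hw).edges ++ (p.dropUntil w hw).edges := by
      conv_lhs => rw [← hspec]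
      rw [Walk.edges_append]
    have hlen : p.length = (p.takeUntil w hw).length + (p.dropUntil w hw).length := by
      conv_lhs => rw [← hspec]
      rw [Walk.length_append]
    rw [hedges, altEdges_append] at halt
    obtain ⟨alt1, alt2⟩ := halt
    have hd0 : (p.dropUntil w hw).length ≠ 0 := fun hz => hwv (Walk.eq_of_length_eq_zero hz)
    rcases Nat.even_or_odd (p.takeUntil w hw).length with hm | hm
    · -- even prefix: its last edge is a matching edge at w, forcing v inside the prefix
      have hm0 : (p.takeUntil w hw).length ≠ 0 := by
        intro hz
        exact hu ((Walk.eq_of_length_eq_zero hz) ▸ (M.edge_vert hadj.symm))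
      have huw : u ≠ w := path_ne (hp.takeUntil hw) hm0
      have hrev := rev_alt (M := M) alt1
      have hflag : flipN false ((p.takeUntil w hw).length - 1) = true := by
        rw [Nat.even_iff] at hm
        have : ¬ Even ((p.takeUntil w hw).length - 1) := by rw [Nat.even_iff]; omega
        exact flipN_of_odd this
      obtain ⟨z, hwz, r1, hr1⟩ := Walk.exists_eq_cons_of_ne (Ne.symm huw)
        ((p.takeUntil w hw).reverse)
      rw [hflag, hr1, Walk.edges_cons] at hrev
      have hMwz : M.Adj w z := Subgraph.mem_edgeSet.mp (hrev.1.mpr rfl)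
      have hzv : z = v := matching_unique hM hMwz hadj.symm
      have hv1 : v ∈ (p.takeUntil w hw).support := by
        have hz : z ∈ ((p.takeUntil w hw).reverse).support := by
          rw [hr1, Walk.support_cons]
          exact List.mem_cons_of_mem _ (Walk.start_mem_support r1)
        rw [Walk.support_reverse, List.mem_reverse, hzv] at hz
        exact hz
      have hv2 : v ∈ (p.dropUntil w hw).support.tail := by
        obtain ⟨z2, hwz2, r2, hr2⟩ := Walk.not_nil_iff.mp
          (by rw [Walk.nil_iff_length_eq]; exact hd0)
        rw [hr2, Walk.support_cons]
        simpa using Walk.end_mem_support r2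
      have hnd : p.support.Nodup := (Walk.isPath_def p).mp hp
      have hsupp : p.support = (p.takeUntil w hw).support ++ (p.dropUntil w hw).support.tail := by
        conv_lhs => rw [← hspec]
        rw [Walk.support_append]
      rw [hsupp] at hnd
      exact (List.disjoint_of_nodup_append hnd) hv1 hv2
    · -- odd prefix: first edge of the suffix is a matching edge at w, parity contradiction
      have hflag2 : flipN false (p.takeUntil w hw).edges.length = true := by
        rw [Nat.odd_iff] at hm
        have : ¬ Even (p.takeUntil w hw).edges.length := by
          rw [Walk.length_edges, Nat.even_iff]; omega
        exact flipN_of_odd this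
      rw [hflag2] at alt2
      obtain ⟨z2, hwz2, r2, hr2⟩ := Walk.not_nil_iff.mp
        (by rw [Walk.nil_iff_length_eq]; exact hd0)
      rw [hr2, Walk.edges_cons] at alt2
      have hMwz2 : M.Adj w z2 := Subgraph.mem_edgeSet.mp (alt2.1.mpr rfl)
      have hz2v : z2 = v := matching_unique hM hMwz2 hadj.symm
      have hevenr2 : Even r2.length := (walk_parity side hbip r2).mpr (by rw [hz2v])
      have hlr2 : (p.dropUntil w hw).length = r2.length + 1 := by
        rw [hr2, Walk.length_cons]
      rw [Nat.odd_iff] at hodd hm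
      rw [Nat.even_iff] at hevenr2
      omega
  refine ⟨u, hu, p.concat hGvw, ?_, ?_, ?_⟩
  · rw [Walk.isPath_def, Walk.support_concat]
    rw [List.nodup_append']
    exact ⟨(Walk.isPath_def p).mp hp, List.nodup_singleton w,
      by simpa [List.disjoint_singleton] using hwns⟩
  · rw [Walk.edges_concat, List.concat_eq_append, altEdges_append]
    refine ⟨halt, ?_⟩
    have hf : flipN false p.edges.length = true := by
      rw [Nat.odd_iff] at hodd
      have : ¬ Even p.edges.length := by rw [Walk.length_edges, Nat.even_iff]; omega
      exact flipN_of_odd this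
    rw [hf]
    exact ⟨by simp [Subgraph.mem_edgeSet]; exact hadj, trivial⟩
  · rw [Walk.length_concat]
    rw [Nat.odd_iff] at hodd
    rw [Nat.even_iff]
    omega
end Classes

section Count
variable {V : Type*} {G : SimpleGraph V}

lemma two_mul_edges [Fintype V] {M : G.Subgraph} (hM : M.IsMatching) :
    2 * M.edgeSet.ncard = M.verts.ncard := by
  classical
  haveI : Fintype ↥M.verts := Fintype.ofFinite _
  have h1 : M.edgeSet.ncard = M.coe.edgeSet.ncard := by
    rw [← Subgraph.image_coe_edgeSet_coe]
    exact Set.ncard_image_of_injective _ (Sym2.map.injective Subtype.val_injective)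
  have h2 : M.verts.toFinset.card = 2 * M.coe.edgeFinset.card := by
    have h := Subgraph.isMatching_iff_forall_degree.mp hM
    rw [← M.coe.sum_degrees_eq_twice_card_edges]
    convert_to _ = Finset.sum Finset.univ fun v => SimpleGraph.degree (Subgraph.coe M) v using 3
    have hdeg : ∀ x : ↥M.verts, M.degree (x : V) = 1 := fun x => by
      have hx := h x.1 x.2
      convert hx using 2
    simp [hdeg, Finset.card_univ]
  have h3 : M.coe.edgeFinset.card = M.coe.edgeSet.ncard := by
    rw [Set.ncard_eq_toFinset_card', edgeFinset]
  have h4 : M.verts.ncard = M.verts.toFinset.card := Set.ncard_eq_toFinset_card' _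
  omega

theorem dm_matched_and_size'
    {V : Type*} [Fintype V] (G : SimpleGraph V)
    (side : V → Bool) (hbip : ∀ u v, G.Adj u v → side u ≠ side v)
    (M : G.Subgraph) (hM : M.IsMatching)
    (hmax : ∀ N : G.Subgraph, N.IsMatching → N.verts.ncard ≤ M.verts.ncard) :
    (∀ v, OddVtx G M v ∨ UnreachableVtx G M v → v ∈ M.verts) ∧
    2 * M.edgeSet.ncard =
      2 * {v | OddVtx G M v}.ncard + {v | UnreachableVtx G M v}.ncard := by
  classical
  set O := {v | OddVtx G M v} with hOdef
  set U := {v | UnreachableVtx G M v} with hUdef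
  set B := {v | EvenVtx G M v ∧ v ∈ M.verts} with hBdef
  have hO_sub : O ⊆ M.verts := fun v hv => odd_matched hM hmax hv
  have hU_sub : U ⊆ M.verts := fun v hv => unreachable_matched hv
  have part1 : ∀ v, OddVtx G M v ∨ UnreachableVtx G M v → v ∈ M.verts := by
    rintro v (h | h)
    · exact odd_matched hM hmax h
    · exact unreachable_matched h
  have hcover : M.verts = O ∪ B ∪ U := by
    ext v
    constructor
    · intro hv
      by_cases hUv : UnreachableVtx G M v
      · exact Or.inr hUv
      · by_cases hOv : OddVtx G M v
        · exact Or.inl (Or.inl hOv)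
        · by_cases hEv : EvenVtx G M v
          · exact Or.inl (Or.inr ⟨hEv, hv⟩)
          · exact absurd (unreachable_iff.mpr ⟨hEv, hOv⟩) hUv
    · rintro ((h | h) | h)
      · exact hO_sub h
      · exact h.2
      · exact hU_sub h
  have hdisjOB : Disjoint O B :=
    Set.disjoint_left.mpr fun v hvO hvB => absurd hvO
      (fun hO' => not_even_and_odd side hbip hM hmax hvB.1 hO')
  have hdisjU : Disjoint (O ∪ B) U := by
    rw [Set.disjoint_left]
    rintro v (hv | hv) hU'
    · exact (unreachable_iff.mp hU').2 hv
    · exact (unreachable_iff.mp hU').1 hv.1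
  have hcard : M.verts.ncard = (O ∪ B).ncard + U.ncard := by
    rw [hcover, Set.ncard_union_eq hdisjU (Set.toFinite _) (Set.toFinite _)]
  have hcard2 : (O ∪ B).ncard = O.ncard + B.ncard :=
    Set.ncard_union_eq hdisjOB (Set.toFinite _) (Set.toFinite _)
  -- the matching pairs O with B
  set f : V → V := fun v => if h : v ∈ M.verts then (hM h).choose else v with hfdef
  have hfadj : ∀ v (h : v ∈ M.verts), M.Adj v (f v) := by
    intro v h
    simp only [hfdef, dif_pos h]
    exact (hM h).choose_spec.1
  have hmaps : Set.MapsTo f O B := by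
    intro v hv
    have hvM := hO_sub hv
    have hadj := hfadj v hvM
    exact ⟨odd_partner side hbip hM hv hadj, M.edge_vert hadj.symm⟩
  have hinj : Set.InjOn f O := by
    intro v1 h1 v2 h2 heq
    have a1 := hfadj v1 (hO_sub h1)
    have a2 := hfadj v2 (hO_sub h2)
    rw [heq] at a1
    exact matching_unique hM a1.symm a2.symm
  have hsurj : Set.SurjOn f O B := by
    intro w hw
    have hadj := hfadj w hw.2
    have hOfw : OddVtx G M (f w) := even_partner hM hw.1 hadj
    refine ⟨f w, hOfw, ?_⟩
    have hfwM : f w ∈ M.verts := M.edge_vert hadj.symm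
    exact matching_unique hM (hfadj (f w) hfwM) hadj.symm
  have hOB : O.ncard = B.ncard := by
    have himg : f '' O = B := Set.BijOn.image_eq ⟨hmaps, hinj, hsurj⟩
    rw [← himg, Set.ncard_image_of_injOn hinj]
  have h2 := two_mul_edges hM
  exact ⟨part1, by omega⟩
end Count

/-- For a maximum matching `M` of a bipartite graph, every odd or unreachable
vertex is matched by `M`, and `|M| = |O| + |U|/2`
(stated multiplied by two: `2·|M| = 2·|O| + |U|`). -/
theorem dm_matched_and_size
    {V : Type*} [Fintype V] (G : SimpleGraph V)
    (side : V → Bool) (hbip : ∀ u v, G.Adj u v → side u ≠ side v)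
    (M : G.Subgraph) (hM : M.IsMatching)
    (hmax : ∀ N : G.Subgraph, N.IsMatching → N.verts.ncard ≤ M.verts.ncard) :
    (∀ v, OddVtx G M v ∨ UnreachableVtx G M v → v ∈ M.verts) ∧
    2 * M.edgeSet.ncard =
      2 * {v | OddVtx G M v}.ncard + {v | UnreachableVtx G M v}.ncard :=
  dm_matched_and_size' G side hbip M hM hmax
end

section
/- In the one-sided preference model, a matching M is popular if and only if (i) every f-job (a job that is some applicant's top choice) is matched by M to an applicant whose top choice it is, and (ii) every applicant is matched to either its top-choice job f_a or its most-preferred non-f-job r_a. -/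
/-- A matching in a bipartite graph `G = (A ∪ B, E)`. -/
structure BMatching (A B : Type*) (E : A → B → Prop) where
  mA : A → Option B
  mB : B → Option A
  consistent : ∀ a b, mA a = some b ↔ mB b = some a
  valid : ∀ a b, mA a = some b → E a b

/-- Vote of an applicant with rank-based preferences `r` (lower rank = better)
comparing two possible partners; unmatched (`none`) is worst. -/
def voteRank {Y : Type*} (r : Y → ℕ) : Option Y → Option Y → ℤ
  | some y, some y' => if r y < r y' then 1 else if r y' < r y then -1 else 0
  | some _, none => 1
  | none, some _ => -1
  | none, none => 0

variable {A B : Type*}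

/-- `b` is applicant `a`'s most preferred neighbour (its top choice `f_a`). -/
def isTop (E : A → B → Prop) (rank : A → B → ℕ) (a : A) (b : B) : Prop :=
  E a b ∧ ∀ b', E a b' → b' ≠ b → rank a b < rank a b'

/-- `b` is an f-job: some applicant's top choice. -/
def isF (E : A → B → Prop) (rank : A → B → ℕ) (b : B) : Prop :=
  ∃ a, isTop E rank a b

/-- `b` is `a`'s most preferred non-f-job `r_a`. -/
def isR (E : A → B → Prop) (rank : A → B → ℕ) (a : A) (b : B) : Prop :=
  E a b ∧ ¬ isF E rank b ∧
    ∀ b', E a b' → ¬ isF E rank b' → b' ≠ b → rank a b < rank a b'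

/-- Popularity in the one-sided model: only applicants in `A` vote. -/
def PopularOS [Fintype A] (E : A → B → Prop) (rank : A → B → ℕ)
    (M : BMatching A B E) : Prop :=
  ∀ N : BMatching A B E, 0 ≤ ∑ a, voteRank (rank a) (M.mA a) (N.mA a)

open Classical in
noncomputable def BMatching.ofFun (E : A → B → Prop) (g : A → Option B)
    (hvalid : ∀ a b, g a = some b → E a b)
    (hinj : ∀ a a' b, g a = some b → g a' = some b → a = a') :
    BMatching A B E where
  mA := g
  mB b := if h : ∃ a, g a = some b then some h.choose else none
  consistent a b := by
    constructor
    · intro h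
      have he : ∃ a, g a = some b := ⟨a, h⟩
      show dite _ _ _ = _
      rw [dif_pos he]
      exact congrArg some (hinj _ _ _ he.choose_spec h)
    · intro h
      by_cases he : ∃ a, g a = some b
      · rw [dif_pos he] at h
        obtain rfl : he.choose = a := Option.some_injective _ h
        exact he.choose_spec
      · rw [dif_neg he] at h; exact absurd h (by simp)
  valid := hvalid

lemma BMatching.mA_inj {E : A → B → Prop} (M : BMatching A B E) {x y : A} {c : B}
    (hx : M.mA x = some c) (hy : M.mA y = some c) : x = y := by
  rw [M.consistent] at hx hy
  exact Option.some_injective _ (hx.symm.trans hy)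

lemma voteRank_self {Y : Type*} (r : Y → ℕ) (o : Option Y) : voteRank r o o = 0 := by
  cases o <;> simp [voteRank]

lemma voteRank_cases {Y : Type*} (r : Y → ℕ) (o o' : Option Y) :
    voteRank r o o' = -1 ∨ voteRank r o o' = 0 ∨ voteRank r o o' = 1 := by
  rcases o with _|y <;> rcases o' with _|y'
  · simp [voteRank]
  · simp [voteRank]
  · simp [voteRank]
  · simp only [voteRank]; split_ifs <;> simp

lemma exists_min {E : A → B → Prop} {rank : A → B → ℕ} [Fintype B]
    (hstrict : ∀ a, Function.Injective (rank a))
    (a : A) (p : B → Prop) {c : B} (hc : E a c) (hpc : p c) :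
    ∃ b, E a b ∧ p b ∧ ∀ b', E a b' → p b' → b' ≠ b → rank a b < rank a b' := by
  classical
  obtain ⟨b, hb, hmin⟩ := Finset.exists_min_image
    (Finset.univ.filter (fun b => E a b ∧ p b)) (rank a)
    ⟨c, by simp [hc, hpc]⟩
  simp only [Finset.mem_filter, Finset.mem_univ, true_and] at hb hmin
  refine ⟨b, hb.1, hb.2, fun b' hE hp hne => ?_⟩
  have := hmin b' ⟨hE, hp⟩
  rcases lt_or_eq_of_le this with h | h
  · exact h
  · exact absurd (hstrict a h) (Ne.symm hne)

lemma isTop_unique {E : A → B → Prop} {rank : A → B → ℕ} {a : A} {b b' : B}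
    (h : isTop E rank a b) (h' : isTop E rank a b') : b = b' := by
  by_contra hne
  exact absurd (h.2 b' h'.1 (Ne.symm hne)) (not_lt.mpr (h'.2 b h.1 hne).le)

lemma voteRank_better {Y : Type*} {r : Y → ℕ} {y y' : Y} (h : r y' < r y) :
    voteRank r (some y) (some y') = -1 := by
  simp [voteRank, h, Nat.lt_asymm h]

lemma voteRank_worse {Y : Type*} {r : Y → ℕ} {y y' : Y} (h : r y < r y') :
    voteRank r (some y) (some y') = 1 := by
  simp [voteRank, h]

lemma voteRank_none_some {Y : Type*} (r : Y → ℕ) (y : Y) :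
    voteRank r none (some y) = -1 := rfl

lemma voteRank_some_none {Y : Type*} (r : Y → ℕ) (y : Y) :
    voteRank r (some y) none = 1 := rfl

section Constructions
set_option linter.unusedSectionVars false

variable [Fintype A] [Fintype B] {E : A → B → Prop} {rank : A → B → ℕ}

lemma not_pop_single (M : BMatching A B E) {a : A} {b : B}
    (hE : E a b) (hfree : M.mB b = none)
    (hbetter : ∀ c, M.mA a = some c → rank a b < rank a c)
    (hpop : PopularOS E rank M) : False := by
  classical
  set g : A → Option B := fun x => if x = a then some b else M.mA x with hg
  have hgdef : ∀ x, g x = if x = a then some b else M.mA x := fun x => rfl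
  have hnotb : ∀ x, M.mA x ≠ some b := by
    intro x h
    rw [M.consistent, hfree] at h
    exact Option.some_ne_none _ h.symm
  have hvalid : ∀ x c, g x = some c → E x c := by
    intro x c h
    rw [hgdef] at h
    split_ifs at h with h1
    · obtain rfl := Option.some_injective _ h.symm
      exact h1 ▸ hE
    · exact M.valid _ _ h
  have hinj : ∀ x y c, g x = some c → g y = some c → x = y := by
    intro x y c hx hy
    rw [hgdef] at hx hy
    split_ifs at hx hy with h1 h2 h2
    · exact h1.trans h2.symm
    · obtain rfl := Option.some_injective _ hx.symm
      exact absurd hy (hnotb y)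
    · obtain rfl := Option.some_injective _ hy.symm
      exact absurd hx (hnotb x)
    · exact M.mA_inj hx hy
  have h := hpop (BMatching.ofFun E g hvalid hinj)
  have hNA : (BMatching.ofFun E g hvalid hinj).mA = g := rfl
  rw [hNA] at h
  have hsum : ∑ x, voteRank (rank x) (M.mA x) (g x) = voteRank (rank a) (M.mA a) (g a) := by
    apply Finset.sum_eq_single
    · intro x _ hx
      rw [hgdef, if_neg hx]
      exact voteRank_self _ _
    · intro hx; exact absurd (Finset.mem_univ a) hx
  have hga : g a = some b := by rw [hgdef, if_pos rfl]
  have hva : voteRank (rank a) (M.mA a) (g a) = -1 := by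
    rw [hga]
    cases hMa : M.mA a with
    | none => rfl
    | some c => exact voteRank_better (hbetter c hMa)
  rw [hsum, hva] at h
  omega


lemma not_pop_A2 (hstrict : ∀ a, Function.Injective (rank a)) (M : BMatching A B E)
    {a a0 : A} {b : B}
    (htop : isTop E rank a b) (hb : M.mB b = some a0)
    (hna0 : ¬ isTop E rank a0 b) (hpop : PopularOS E rank M) : False := by
  classical
  have hMa0 : M.mA a0 = some b := (M.consistent a0 b).mpr hb
  obtain ⟨b2, hE2, -, hmin2⟩ :=
    exists_min hstrict a0 (fun _ => True) (M.valid _ _ hMa0) trivial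
  have htop2 : isTop E rank a0 b2 := ⟨hE2, fun b' h1 h2 => hmin2 b' h1 trivial h2⟩
  have hbb : b2 ≠ b := fun h => hna0 (h ▸ htop2)
  have haa : a ≠ a0 := fun h => hna0 (h ▸ htop)
  have hrk : rank a0 b2 < rank a0 b := htop2.2 b (M.valid _ _ hMa0) (Ne.symm hbb)
  have hMab : M.mA a ≠ some b := fun h => haa (M.mA_inj h hMa0)
  set g : A → Option B := fun x =>
    if x = a then some b else if x = a0 then some b2
    else if M.mA x = some b2 then none else M.mA x with hg
  have hgdef : ∀ x, g x = if x = a then some b else if x = a0 then some b2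
      else if M.mA x = some b2 then none else M.mA x := fun x => rfl
  have hgchar : ∀ x c, g x = some c →
      (x = a ∧ c = b) ∨ (x = a0 ∧ c = b2) ∨
      (x ≠ a ∧ x ≠ a0 ∧ M.mA x = some c ∧ c ≠ b2) := by
    intro x c h
    rw [hgdef] at h
    split_ifs at h with h1 h2 h3
    · exact Or.inl ⟨h1, (Option.some_inj.mp h).symm⟩
    · exact Or.inr (Or.inl ⟨h2, (Option.some_inj.mp h).symm⟩)
    · refine Or.inr (Or.inr ⟨h1, h2, h, ?_⟩)
      rintro rfl; exact h3 h
  have hinj : ∀ x y c, g x = some c → g y = some c → x = y := by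
    intro x y c hx hy
    rcases hgchar x c hx with ⟨hx1, hx2⟩ | ⟨hx1, hx2⟩ | ⟨hx1, hx2, hx3, hx4⟩ <;>
      rcases hgchar y c hy with ⟨hy1, hy2⟩ | ⟨hy1, hy2⟩ | ⟨hy1, hy2, hy3, hy4⟩
    · exact hx1.trans hy1.symm
    · exact absurd (hy2.symm.trans hx2) hbb
    · subst hx2; exact absurd (M.mA_inj hy3 hMa0) hy2
    · exact absurd (hx2.symm.trans hy2) hbb
    · exact hx1.trans hy1.symm
    · subst hx2; exact absurd rfl hy4
    · subst hy2; exact absurd (M.mA_inj hx3 hMa0) hx2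
    · subst hy2; exact absurd rfl hx4
    · exact M.mA_inj hx3 hy3
  have hvalid : ∀ x c, g x = some c → E x c := by
    intro x c h
    rcases hgchar x c h with h | h | h
    · exact h.1 ▸ h.2 ▸ htop.1
    · exact h.1 ▸ h.2 ▸ hE2
    · exact M.valid _ _ h.2.2.1
  have h := hpop (BMatching.ofFun E g hvalid hinj)
  have hNA : (BMatching.ofFun E g hvalid hinj).mA = g := rfl
  rw [hNA] at h
  have hva : voteRank (rank a) (M.mA a) (g a) = -1 := by
    rw [hgdef, if_pos rfl]
    cases hMa : M.mA a with
    | none => rfl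
    | some c =>
      have hcb : c ≠ b := fun hc => hMab (hc ▸ hMa)
      exact voteRank_better (htop.2 c (M.valid _ _ hMa) hcb)
  have hva0 : voteRank (rank a0) (M.mA a0) (g a0) = -1 := by
    rw [hgdef, if_neg (Ne.symm haa), if_pos rfl, hMa0]
    exact voteRank_better hrk
  have hzero : ∀ x, x ≠ a → x ≠ a0 → M.mA x ≠ some b2 →
      voteRank (rank x) (M.mA x) (g x) = 0 := by
    intro x h1 h2 h3
    rw [hgdef, if_neg h1, if_neg h2, if_neg h3]
    exact voteRank_self _ _
  by_cases hA1 : ∃ a1, M.mA a1 = some b2 ∧ a1 ≠ a ∧ a1 ≠ a0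
  · obtain ⟨a1, hMa1, h1a, h1a0⟩ := hA1
    have hva1 : voteRank (rank a1) (M.mA a1) (g a1) = 1 := by
      rw [hgdef, if_neg h1a, if_neg h1a0, if_pos hMa1, hMa1]
      rfl
    have hsub : ∑ x, voteRank (rank x) (M.mA x) (g x)
        = ∑ x ∈ ({a, a0, a1} : Finset A), voteRank (rank x) (M.mA x) (g x) := by
      refine (Finset.sum_subset (Finset.subset_univ _) ?_).symm
      intro x _ hx
      simp only [Finset.mem_insert, Finset.mem_singleton, not_or] at hx
      exact hzero x hx.1 hx.2.1 (fun hc => hx.2.2 (M.mA_inj hc hMa1))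
    rw [hsub, Finset.sum_insert (by simp [haa, Ne.symm h1a]),
        Finset.sum_insert (by simp [Ne.symm h1a0]),
        Finset.sum_singleton, hva, hva0, hva1] at h
    omega
  · push_neg at hA1
    have hsub : ∑ x, voteRank (rank x) (M.mA x) (g x)
        = ∑ x ∈ ({a, a0} : Finset A), voteRank (rank x) (M.mA x) (g x) := by
      refine (Finset.sum_subset (Finset.subset_univ _) ?_).symm
      intro x _ hx
      simp only [Finset.mem_insert, Finset.mem_singleton, not_or] at hx
      exact hzero x hx.1 hx.2 (fun hc => hx.2 (hA1 x hc hx.1))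
    rw [hsub, Finset.sum_pair haa, hva, hva0] at h
    omega


lemma not_pop_B (hstrict : ∀ a, Function.Injective (rank a)) (M : BMatching A B E)
    (hF : ∀ b, isF E rank b → ∃ a, M.mB b = some a ∧ isTop E rank a b)
    {a : A} {rb : B} (hrb : isR E rank a rb)
    (hM : ∀ c, M.mA a = some c → ¬ isF E rank c ∧ rank a rb < rank a c)
    (hpop : PopularOS E rank M) : False := by
  classical
  have hnrb : M.mA a ≠ some rb := fun h => lt_irrefl _ (hM rb h).2
  cases hocc : M.mB rb with
  | none =>
    exact not_pop_single M hrb.1 hocc (fun c hc => (hM c hc).2) hpop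
  | some a2 =>
    have hMa2 : M.mA a2 = some rb := (M.consistent a2 rb).mpr hocc
    have haa2 : a2 ≠ a := fun h => hnrb (h ▸ hMa2)
    obtain ⟨f2, hEf2, -, hminf2⟩ :=
      exists_min hstrict a2 (fun _ => True) (M.valid _ _ hMa2) trivial
    have htop2 : isTop E rank a2 f2 := ⟨hEf2, fun b' h1 h2 => hminf2 b' h1 trivial h2⟩
    have hFf2 : isF E rank f2 := ⟨a2, htop2⟩
    have hf2rb : f2 ≠ rb := fun h => hrb.2.1 (h ▸ hFf2)
    obtain ⟨a3, hb3, htop3⟩ := hF f2 hFf2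
    have hMa3 : M.mA a3 = some f2 := (M.consistent a3 f2).mpr hb3
    have ha32 : a3 ≠ a2 := fun h => hf2rb (Option.some_inj.mp (hMa2.symm.trans (h ▸ hMa3))).symm
    have ha3a : a3 ≠ a := fun h => (hM f2 (h ▸ hMa3)).1 hFf2
    have hrk2 : rank a2 f2 < rank a2 rb := htop2.2 rb (M.valid _ _ hMa2) (Ne.symm hf2rb)
    set g : A → Option B := fun x =>
      if x = a then some rb else if x = a2 then some f2
      else if x = a3 then none else M.mA x with hg
    have hgdef : ∀ x, g x = if x = a then some rb else if x = a2 then some f2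
        else if x = a3 then none else M.mA x := fun x => rfl
    have hgchar : ∀ x c, g x = some c →
        (x = a ∧ c = rb) ∨ (x = a2 ∧ c = f2) ∨
        (x ≠ a ∧ x ≠ a2 ∧ x ≠ a3 ∧ M.mA x = some c) := by
      intro x c h
      rw [hgdef] at h
      split_ifs at h with h1 h2 h3
      · exact Or.inl ⟨h1, (Option.some_inj.mp h).symm⟩
      · exact Or.inr (Or.inl ⟨h2, (Option.some_inj.mp h).symm⟩)
      · exact Or.inr (Or.inr ⟨h1, h2, h3, h⟩)
    have hinj : ∀ x y c, g x = some c → g y = some c → x = y := by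
      intro x y c hx hy
      rcases hgchar x c hx with ⟨hx1, hx2⟩ | ⟨hx1, hx2⟩ | ⟨hx1, hx2, hx3, hx4⟩ <;>
        rcases hgchar y c hy with ⟨hy1, hy2⟩ | ⟨hy1, hy2⟩ | ⟨hy1, hy2, hy3, hy4⟩
      · exact hx1.trans hy1.symm
      · exact absurd (hy2.symm.trans hx2) hf2rb
      · subst hx2; exact absurd (M.mA_inj hy4 hMa2) hy2
      · exact absurd (hx2.symm.trans hy2) hf2rb
      · exact hx1.trans hy1.symm
      · subst hx2; exact absurd (M.mA_inj hy4 hMa3) hy3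
      · subst hy2; exact absurd (M.mA_inj hx4 hMa2) hx2
      · subst hy2; exact absurd (M.mA_inj hx4 hMa3) hx3
      · exact M.mA_inj hx4 hy4
    have hvalid : ∀ x c, g x = some c → E x c := by
      intro x c h
      rcases hgchar x c h with h | h | h
      · exact h.1 ▸ h.2 ▸ hrb.1
      · exact h.1 ▸ h.2 ▸ hEf2
      · exact M.valid _ _ h.2.2.2
    have h := hpop (BMatching.ofFun E g hvalid hinj)
    have hNA : (BMatching.ofFun E g hvalid hinj).mA = g := rfl
    rw [hNA] at h
    have hva : voteRank (rank a) (M.mA a) (g a) = -1 := by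
      rw [hgdef, if_pos rfl]
      cases hMa : M.mA a with
      | none => rfl
      | some c => exact voteRank_better (hM c hMa).2
    have hva2 : voteRank (rank a2) (M.mA a2) (g a2) = -1 := by
      rw [hgdef, if_neg haa2, if_pos rfl, hMa2]
      exact voteRank_better hrk2
    have hva3 : voteRank (rank a3) (M.mA a3) (g a3) = 1 := by
      rw [hgdef, if_neg ha3a, if_neg ha32, if_pos rfl, hMa3]
      rfl
    have hsub : ∑ x, voteRank (rank x) (M.mA x) (g x)
        = ∑ x ∈ ({a, a2, a3} : Finset A), voteRank (rank x) (M.mA x) (g x) := by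
      refine (Finset.sum_subset (Finset.subset_univ _) ?_).symm
      intro x _ hx
      simp only [Finset.mem_insert, Finset.mem_singleton, not_or] at hx
      rw [hgdef, if_neg hx.1, if_neg hx.2.1, if_neg hx.2.2]
      exact voteRank_self _ _
    rw [hsub, Finset.sum_insert (by simp [Ne.symm haa2, Ne.symm ha3a]),
        Finset.sum_insert (by simp [Ne.symm ha32]),
        Finset.sum_singleton, hva, hva2, hva3] at h
    omega

end Constructions

lemma sum_vote_nonneg [Fintype A] (v : A → ℤ)
    (hval : ∀ x, v x = -1 ∨ v x = 0 ∨ v x = 1)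
    (φ : A → A) (hmap : ∀ x, v x = -1 → v (φ x) = 1)
    (hinj : ∀ x y, v x = -1 → v y = -1 → φ x = φ y → x = y) :
    0 ≤ ∑ x, v x := by
  classical
  set P := Finset.univ.filter (fun x => v x = -1) with hP
  set Q := Finset.univ.filter (fun x => v x = 1) with hQ
  have hmemP : ∀ x, x ∈ P ↔ v x = -1 := by
    intro x; simp [hP]
  have hmemQ : ∀ x, x ∈ Q ↔ v x = 1 := by
    intro x; simp [hQ]
  have hcard : P.card ≤ Q.card := by
    apply Finset.card_le_card_of_injOn φ
    · intro x hx
      exact (hmemQ _).mpr (hmap x ((hmemP _).mp hx))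
    · intro x hx y hy hxy
      exact hinj x y ((hmemP _).mp hx) ((hmemP _).mp hy) hxy
  have hsplit := Finset.sum_filter_add_sum_filter_not Finset.univ (fun x => v x = -1) v
  have h1 : ∑ x ∈ P, v x = -(P.card : ℤ) := by
    rw [Finset.sum_congr rfl (fun x hx => (hmemP x).mp hx), Finset.sum_const]
    simp
  have hQsum : ∑ x ∈ Q, v x = (Q.card : ℤ) := by
    rw [Finset.sum_congr rfl (fun x hx => (hmemQ x).mp hx), Finset.sum_const]
    simp
  have h2 : (Q.card : ℤ) ≤ ∑ x ∈ Finset.univ.filter (fun x => ¬ v x = -1), v x := by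
    rw [← hQsum]
    apply Finset.sum_le_sum_of_subset_of_nonneg
    · intro x hx
      have := (hmemQ x).mp hx
      simp only [Finset.mem_filter, Finset.mem_univ, true_and]
      omega
    · intro x hx _
      have hne : ¬ v x = -1 := (Finset.mem_filter.mp hx).2
      rcases hval x with h | h | h <;> omega
  have hc' : (P.card : ℤ) ≤ (Q.card : ℤ) := Nat.cast_le.mpr hcard
  rw [← hP] at hsplit
  linarith

/-- Characterization of popular matchings in the one-sided model (Abraham et
al.): `M` is popular iff (i) every f-job is matched by `M` to an applicant
whose top choice it is, and (ii) every applicant is matched to its top job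
`f_a` or to its most preferred non-f-job `r_a` (an applicant may only be
unmatched when it has no non-f-job, i.e. `r_a = ∞`). -/
theorem one_sided_popular_characterization
    [Fintype A] [Fintype B] (E : A → B → Prop) (rank : A → B → ℕ)
    (hstrict : ∀ a, Function.Injective (rank a))
    (M : BMatching A B E) :
    PopularOS E rank M ↔
      ((∀ b, isF E rank b → ∃ a, M.mB b = some a ∧ isTop E rank a b) ∧
       (∀ a, (∀ b, M.mA a = some b → isTop E rank a b ∨ isR E rank a b) ∧
             (M.mA a = none → ∀ b, ¬ isR E rank a b))) := by
  constructor
  · intro hpop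
    have hF : ∀ b, isF E rank b → ∃ a, M.mB b = some a ∧ isTop E rank a b := by
      intro b hFb
      obtain ⟨a, htop⟩ := hFb
      cases hb : M.mB b with
      | none =>
        exfalso
        refine not_pop_single M htop.1 hb (fun c hc => ?_) hpop
        refine htop.2 c (M.valid _ _ hc) (fun h => ?_)
        rw [h, M.consistent, hb] at hc
        exact Option.some_ne_none _ hc.symm
      | some a0 =>
        refine ⟨a0, rfl, ?_⟩
        by_contra hna0
        exact not_pop_A2 hstrict M htop hb hna0 hpop
    refine ⟨hF, fun a => ⟨?_, ?_⟩⟩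
    · intro b0 hb0
      by_contra hn
      push_neg at hn
      obtain ⟨hn1, hn2⟩ := hn
      have hnF : ¬ isF E rank b0 := by
        intro hf
        obtain ⟨a', ha', htop'⟩ := hF b0 hf
        have he : a' = a := Option.some_inj.mp (ha'.symm.trans ((M.consistent a b0).mp hb0))
        exact hn1 (he ▸ htop')
      obtain ⟨rb, hErb, hnFrb, hmin⟩ :=
        exists_min hstrict a (fun b => ¬ isF E rank b) (M.valid _ _ hb0) hnF
      have hrb : isR E rank a rb := ⟨hErb, hnFrb, hmin⟩
      have hne : rb ≠ b0 := fun h => hn2 (h ▸ hrb)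
      refine not_pop_B hstrict M hF hrb (fun c hc => ?_) hpop
      have hcb : c = b0 := Option.some_inj.mp (hc.symm.trans hb0)
      rw [hcb]
      exact ⟨hnF, hmin b0 (M.valid _ _ hb0) hnF (Ne.symm hne)⟩
    · intro hnone rb hrb
      refine not_pop_B hstrict M hF hrb (fun c hc => ?_) hpop
      rw [hnone] at hc
      exact absurd hc.symm (Option.some_ne_none _)
  · rintro ⟨hi, hii⟩ N
    have key : ∀ x, ∃ y,
        voteRank (rank x) (M.mA x) (N.mA x) = -1 →
        (voteRank (rank y) (M.mA y) (N.mA y) = 1 ∧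
         ∃ b, N.mA x = some b ∧ M.mA y = some b) := by
      intro x
      by_cases hx : voteRank (rank x) (M.mA x) (N.mA x) = -1
      swap
      · exact ⟨x, fun h => absurd h hx⟩
      cases hNx : N.mA x with
      | none =>
        rw [hNx] at hx
        cases hMx : M.mA x <;> rw [hMx] at hx <;> simp [voteRank] at hx
      | some b =>
        have hEb : E x b := N.valid _ _ hNx
        have hbetter : ∀ c, M.mA x = some c → rank x b < rank x c := by
          intro c hc
          rw [hNx, hc] at hx
          simp only [voteRank] at hx
          split_ifs at hx <;> omega
        have hMxb : M.mA x ≠ some b := fun h => lt_irrefl _ (hbetter b h)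
        have hFb : isF E rank b := by
          by_contra hnF
          cases hMx : M.mA x with
          | none =>
            obtain ⟨rb, h1, h2, h3⟩ :=
              exists_min hstrict x (fun c => ¬ isF E rank c) hEb hnF
            exact (hii x).2 hMx rb ⟨h1, h2, h3⟩
          | some c =>
            have hbc : b ≠ c := fun h => hMxb (h ▸ hMx)
            rcases (hii x).1 c hMx with htopc | hrc
            · exact absurd (htopc.2 b hEb hbc) (not_lt.mpr (hbetter c hMx).le)
            · exact absurd (hrc.2.2 b hEb hnF hbc) (not_lt.mpr (hbetter c hMx).le)
        obtain ⟨y, hy, htopy⟩ := hi b hFb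
        have hMy : M.mA y = some b := (M.consistent y b).mpr hy
        refine ⟨y, fun _ => ⟨?_, b, rfl, hMy⟩⟩
        have hNy : N.mA y ≠ some b := fun h =>
          hMxb (by rw [N.mA_inj hNx h]; exact hMy)
        cases hNyv : N.mA y with
        | none => rw [hMy]; rfl
        | some b' =>
          have hb' : b' ≠ b := fun h => hNy (h ▸ hNyv)
          rw [hMy]
          exact voteRank_worse (htopy.2 b' (N.valid _ _ hNyv) hb')
    choose φ hφ using key
    refine sum_vote_nonneg _ (fun x => voteRank_cases _ _ _) φ (fun x hx => (hφ x hx).1) ?_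
    intro x y hx hy hxy
    obtain ⟨-, b1, hN1, hM1⟩ := hφ x hx
    obtain ⟨-, b2, hN2, hM2⟩ := hφ y hy
    rw [hxy] at hM1
    obtain rfl : b1 = b2 := Option.some_inj.mp (hM1.symm.trans hM2)
    rw [N.consistent] at hN1 hN2
    exact Option.some_inj.mp (hN1.symm.trans hN2)
end
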